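/- Let n ≥ 1 and B_i = 2^i · i!. The map b_n : B_n → {0, 1, ..., 2^n·n! − 1} defined by b_n(π) = Σ_{i=1}^{n} inv_i(π) · B_{n−i} is a bijection. -/

import Mathlib

/-- A signed permutation `π` of `[n]`: `π(i) = ε i · σ(i)` with `σ` a permutation
of `[n]` and signs `ε i ∈ {±1}`.  Positions are encoded by `Fin n`
(position `i ∈ [n]` corresponds to `⟨i-1, _⟩ : Fin n`). -/
structure SignedPerm (n : ℕ) where
  σ : Equiv.Perm (Fin n)
  ε : Fin n → ℤ
  hε : ∀ i, ε i = 1 ∨ ε i = -1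

namespace SignedPerm

variable {n : ℕ}

/-- The signed value `π(i) = ε i · σ(i) ∈ {-n, …, -1, 1, …, n}` (1-based value). -/
def val (π : SignedPerm n) (i : Fin n) : ℤ :=
  π.ε i * ((π.σ i : ℕ) + 1)

/-- The standard basis vector `e i` of `ℝ^n`. -/
def e (i : Fin n) : Fin n → ℝ := Pi.single i 1

/-- The action of a signed permutation on `ℝ^n`, determined by
`π · e i = ε i · e (σ i)`. -/
def act (π : SignedPerm n) (v : Fin n → ℝ) : Fin n → ℝ :=
  fun j => (π.ε (π.σ.symm j) : ℝ) * v (π.σ.symm j)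

/-- The positive root system `Φₙ⁺ = {e k, e i + e j, e i - e j : k, i < j}` of `Bₙ`. -/
def PhiPos (n : ℕ) : Set (Fin n → ℝ) :=
  {v | (∃ k : Fin n, v = e k) ∨ ∃ i j : Fin n, i < j ∧ (v = e i + e j ∨ v = e i - e j)}

/-- The positive roots `Φₙ,ᵢ⁺ = {e i, e i + e j, e i - e j : i < j ≤ n}`. -/
def PhiPosI (n : ℕ) (i : Fin n) : Set (Fin n → ℝ) :=
  {v | v = e i ∨ ∃ j : Fin n, i < j ∧ (v = e i + e j ∨ v = e i - e j)}

/-- The `i`-inversion number `invᵢ π = #{v ∈ Φₙ,ᵢ⁺ : π · v ∈ -Φₙ⁺}`. -/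
noncomputable def invi (i : Fin n) (π : SignedPerm n) : ℕ :=
  Set.ncard {v | v ∈ PhiPosI n i ∧ -(π.act v) ∈ PhiPos n}

/-- The inversion number `inv π = #{v ∈ Φₙ⁺ : π · v ∈ -Φₙ⁺}`. -/
noncomputable def inv (π : SignedPerm n) : ℕ :=
  Set.ncard {v | v ∈ PhiPos n ∧ -(π.act v) ∈ PhiPos n}

lemma e_apply (i m : Fin n) : e i m = if m = i then 1 else 0 := Pi.single_apply i 1 m

lemma smul_e_apply (s : ℝ) (i m : Fin n) : (s • e i) m = if m = i then s else 0 := by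
  simp [e_apply, mul_ite]

lemma pair_apply (s t : ℝ) (a b m : Fin n) :
    (s • e a + t • e b) m = (if m = a then s else 0) + (if m = b then t else 0) := by
  simp [e_apply, mul_ite]

lemma single_mem (s : ℝ) (hs : s = 1 ∨ s = -1) (a : Fin n) :
    s • e a ∈ PhiPos n ↔ s = 1 := by
  constructor
  · rintro (⟨k, h⟩ | ⟨i, j, hij, (h | h)⟩)
    · have h1 := congrFun h k
      rw [smul_e_apply, e_apply, if_pos rfl] at h1
      rcases hs with rfl | rfl
      · rfl
      · split_ifs at h1 <;> norm_num at h1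
    · have h1 := congrFun h i
      rw [smul_e_apply] at h1
      rw [show (e i + e j) i = 1 by
        simp [e_apply, Pi.add_apply, if_pos rfl, if_neg hij.ne]] at h1
      rcases hs with rfl | rfl
      · rfl
      · split_ifs at h1 <;> norm_num at h1
    · have h1 := congrFun h i
      rw [smul_e_apply] at h1
      rw [show (e i - e j) i = 1 by
        simp [e_apply, Pi.sub_apply, if_pos rfl, if_neg hij.ne]] at h1
      rcases hs with rfl | rfl
      · rfl
      · split_ifs at h1 <;> norm_num at h1
  · rintro rfl
    exact Or.inl ⟨a, by rw [one_smul]⟩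

lemma pair_mem (s t : ℝ) (hs : s = 1 ∨ s = -1) (ht : t = 1 ∨ t = -1) (a b : Fin n)
    (hab : a ≠ b) :
    s • e a + t • e b ∈ PhiPos n ↔
      (s = 1 ∧ t = 1) ∨ (s = 1 ∧ t = -1 ∧ a < b) ∨ (s = -1 ∧ t = 1 ∧ b < a) := by
  have hane : (if a = b then t else 0) = 0 := if_neg hab
  have hbne : (if b = a then s else 0) = 0 := if_neg (Ne.symm hab)
  constructor
  · rintro (⟨k, h⟩ | ⟨i, j, hij, (h | h)⟩)
    · have h1 := congrFun h a
      have h2 := congrFun h b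
      rw [pair_apply, if_pos rfl, hane, add_zero, e_apply] at h1
      rw [pair_apply, if_pos rfl, hbne, zero_add, e_apply] at h2
      have ha : a = k := by
        by_contra hne; rw [if_neg hne] at h1; rcases hs with rfl | rfl <;> norm_num at h1
      have hb : b = k := by
        by_contra hne; rw [if_neg hne] at h2; rcases ht with rfl | rfl <;> norm_num at h2
      exact absurd (ha.trans hb.symm) hab
    · have h1 := congrFun h a
      have h2 := congrFun h b
      rw [pair_apply, if_pos rfl, hane, add_zero, Pi.add_apply, e_apply, e_apply] at h1
      rw [pair_apply, if_pos rfl, hbne, zero_add, Pi.add_apply, e_apply, e_apply] at h2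
      refine Or.inl ⟨?_, ?_⟩
      · rcases hs with rfl | rfl
        · rfl
        · split_ifs at h1 <;> norm_num at h1 <;> exact absurd (h1 ▸ hij.ne) (by simp_all)
      · rcases ht with rfl | rfl
        · rfl
        · split_ifs at h2 <;> norm_num at h2 <;> exact absurd (h2 ▸ hij.ne) (by simp_all)
    · have h1 := congrFun h a
      have h2 := congrFun h b
      rw [pair_apply, if_pos rfl, hane, add_zero, Pi.sub_apply, e_apply, e_apply] at h1
      rw [pair_apply, if_pos rfl, hbne, zero_add, Pi.sub_apply, e_apply, e_apply] at h2
      have hne : i ≠ j := hij.ne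
      rcases hs with rfl | rfl <;> rcases ht with rfl | rfl <;>
        split_ifs at h1 h2 <;> (try norm_num at h1) <;> (try norm_num at h2) <;> subst_vars <;> simp_all <;> omega
  · rintro (⟨rfl, rfl⟩ | ⟨rfl, rfl, hlt⟩ | ⟨rfl, rfl, hlt⟩)
    · rcases lt_or_gt_of_ne hab with hlt | hlt
      · exact Or.inr ⟨a, b, hlt, Or.inl (by simp)⟩
      · exact Or.inr ⟨b, a, hlt, Or.inl (by rw [add_comm]; simp)⟩
    · exact Or.inr ⟨a, b, hlt, Or.inr (by simp [sub_eq_add_neg])⟩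
    · exact Or.inr ⟨b, a, hlt, Or.inr (by rw [add_comm]; simp [sub_eq_add_neg])⟩

lemma act_e (π : SignedPerm n) (i : Fin n) :
    π.act (e i) = ((π.ε i : ℝ)) • e (π.σ i) := by
  funext m
  rw [smul_e_apply]
  simp only [act, e_apply]
  by_cases h : m = π.σ i
  · rw [if_pos h, if_pos (by rw [h]; exact π.σ.symm_apply_apply i), h,
      π.σ.symm_apply_apply i, mul_one]
  · rw [if_neg h, if_neg (fun hc => h (by rw [← hc, π.σ.apply_symm_apply])), mul_zero]

lemma act_add (π : SignedPerm n) (v w : Fin n → ℝ) :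
    π.act (v + w) = π.act v + π.act w := by
  funext m; simp [act, mul_add]

lemma act_sub (π : SignedPerm n) (v w : Fin n → ℝ) :
    π.act (v - w) = π.act v - π.act w := by
  funext m; simp [act, mul_sub]

lemma eps_real (π : SignedPerm n) (i : Fin n) :
    ((π.ε i : ℝ)) = 1 ∨ ((π.ε i : ℝ)) = -1 := by
  rcases π.hε i with h | h <;> [left; right] <;> rw [h] <;> norm_num

/-- index type for the roots in `PhiPosI n i` -/
abbrev RIdx (i : Fin n) := Option ({j : Fin n // i < j} × Bool)

def root (i : Fin n) : RIdx i → (Fin n → ℝ)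
  | none => e i
  | some (j, true) => e i + e j
  | some (j, false) => e i - e j

lemma root_inj (i : Fin n) : Function.Injective (root i) := by
  intro t₁ t₂ h
  have key : ∀ (j : {j : Fin n // i < j}) (b : Bool) (t : RIdx i),
      root i (some (j, b)) = root i t → some (j, b) = t := by
    rintro j b t h
    rcases t with _ | ⟨j', b'⟩
    · exfalso
      have := congrFun h j
      rcases b <;> simp [root, e_apply, Pi.add_apply, Pi.sub_apply,
        if_neg (j.2.ne' : (j : Fin n) ≠ i)] at this
    · have hj : (j : Fin n) = (j' : Fin n) := by
        by_contra hne
        have := congrFun h j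
        rcases b <;> rcases b' <;>
          simp [root, e_apply, Pi.add_apply, Pi.sub_apply, hne,
            if_neg (j.2.ne' : (j : Fin n) ≠ i), if_neg (j'.2.ne' : (j' : Fin n) ≠ i)] at this
      have hb : b = b' := by
        by_contra hne
        have := congrFun h j
        rcases b <;> rcases b' <;> simp_all [root, e_apply, Pi.add_apply, Pi.sub_apply,
          if_neg (j.2.ne' : (j : Fin n) ≠ i), if_neg (j'.2.ne' : ((j' : Fin n)) ≠ i)] <;> norm_num at this
      rw [Subtype.ext hj, hb]
  match t₁, t₂ with
  | none, none => rfl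
  | none, some (j, b) => exact (key j b none h.symm).symm
  | some (j, b), t => exact key j b t h

lemma PhiPosI_eq_range (i : Fin n) : PhiPosI n i = Set.range (root i) := by
  ext v
  constructor
  · rintro (rfl | ⟨j, hij, (rfl | rfl)⟩)
    · exact ⟨none, rfl⟩
    · exact ⟨some (⟨j, hij⟩, true), rfl⟩
    · exact ⟨some (⟨j, hij⟩, false), rfl⟩
  · rintro ⟨(_ | ⟨j, b⟩), rfl⟩
    · exact Or.inl rfl
    · rcases b with _ | _
      · exact Or.inr ⟨j, j.2, Or.inr rfl⟩
      · exact Or.inr ⟨j, j.2, Or.inl rfl⟩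

open Classical in
lemma invi_eq_card (i : Fin n) (π : SignedPerm n) :
    invi i π =
      (Finset.univ.filter fun t : RIdx i => -(π.act (root i t)) ∈ PhiPos n).card := by
  unfold invi
  have hset : {v | v ∈ PhiPosI n i ∧ -(π.act v) ∈ PhiPos n}
      = root i '' {t | -(π.act (root i t)) ∈ PhiPos n} := by
    rw [PhiPosI_eq_range]
    ext v
    constructor
    · rintro ⟨⟨t, rfl⟩, hq⟩; exact ⟨t, hq, rfl⟩
    · rintro ⟨t, hq, rfl⟩; exact ⟨⟨t, rfl⟩, hq⟩
  rw [hset, Set.ncard_image_of_injective _ (root_inj i),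
    Set.ncard_eq_toFinset_card', Set.toFinset_setOf]

lemma int_cast_eq_one {x : ℤ} : ((x : ℝ)) = 1 ↔ x = 1 := by
  rw [show (1:ℝ) = ((1:ℤ):ℝ) by norm_num, Int.cast_inj]

lemma int_cast_eq_negone {x : ℤ} : ((x : ℝ)) = -1 ↔ x = -1 := by
  rw [show (-1:ℝ) = ((-1:ℤ):ℝ) by norm_num, Int.cast_inj]

lemma neg_cast_eq_one {x : ℤ} : -((x : ℝ)) = 1 ↔ x = -1 := by
  rw [neg_eq_iff_eq_neg, int_cast_eq_negone]

lemma neg_cast_eq_negone {x : ℤ} : -((x : ℝ)) = -1 ↔ x = 1 := by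
  rw [neg_eq_iff_eq_neg, neg_neg, int_cast_eq_one]

lemma cond_none (π : SignedPerm n) (i : Fin n) :
    (-(π.act (root i none)) ∈ PhiPos n) ↔ π.ε i = -1 := by
  show (-(π.act (e i)) ∈ PhiPos n) ↔ _
  rw [act_e, ← neg_smul]
  rw [single_mem _ (by rcases eps_real π i with h | h <;> [right; left] <;> rw [h] <;> norm_num)]
  exact neg_cast_eq_one

lemma sigma_ne (π : SignedPerm n) {i j : Fin n} (h : i ≠ j) : π.σ i ≠ π.σ j :=
  fun hc => h (π.σ.injective hc)

lemma cond_some_true (π : SignedPerm n) (i : Fin n) (j : {j : Fin n // i < j}) :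
    (-(π.act (root i (some (j, true)))) ∈ PhiPos n) ↔
      (π.ε i = -1 ∧ π.ε j = -1) ∨ (π.ε i = -1 ∧ π.ε j = 1 ∧ π.σ i < π.σ j)
        ∨ (π.ε i = 1 ∧ π.ε j = -1 ∧ π.σ j < π.σ i) := by
  show (-(π.act (e i + e j)) ∈ PhiPos n) ↔ _
  rw [act_add, act_e, act_e, neg_add, ← neg_smul, ← neg_smul]
  have hs : -((π.ε i : ℝ)) = 1 ∨ -((π.ε i : ℝ)) = -1 := by
    rcases eps_real π i with h | h <;> [right; left] <;> rw [h] <;> norm_num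
  have ht : -((π.ε j : ℝ)) = 1 ∨ -((π.ε j : ℝ)) = -1 := by
    rcases eps_real π j with h | h <;> [right; left] <;> rw [h] <;> norm_num
  rw [pair_mem _ _ hs ht _ _ (sigma_ne π j.2.ne)]
  simp only [neg_cast_eq_one, neg_cast_eq_negone]

lemma cond_some_false (π : SignedPerm n) (i : Fin n) (j : {j : Fin n // i < j}) :
    (-(π.act (root i (some (j, false)))) ∈ PhiPos n) ↔
      (π.ε i = -1 ∧ π.ε j = 1) ∨ (π.ε i = -1 ∧ π.ε j = -1 ∧ π.σ i < π.σ j)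
        ∨ (π.ε i = 1 ∧ π.ε j = 1 ∧ π.σ j < π.σ i) := by
  show (-(π.act (e i - e j)) ∈ PhiPos n) ↔ _
  rw [act_sub, act_e, act_e, neg_sub, sub_eq_add_neg, add_comm, ← neg_smul]
  rw [pair_mem _ _ (by rcases eps_real π i with h | h <;> [right; left] <;> rw [h] <;> norm_num)
    (eps_real π j) _ _ (sigma_ne π j.2.ne)]
  simp only [neg_cast_eq_one, neg_cast_eq_negone, int_cast_eq_one, int_cast_eq_negone]

open Classical in
/-- inversion-table entry -/
noncomputable def rt (σ : Equiv.Perm (Fin n)) (i : Fin n) : ℕ :=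
  ∑ j : Fin n, if i < j ∧ σ j < σ i then 1 else 0

open Classical in
noncomputable def st (σ : Equiv.Perm (Fin n)) (i : Fin n) : ℕ :=
  ∑ j : Fin n, if i < j ∧ σ i < σ j then 1 else 0

open Classical in
lemma sum_subtype_lt (i : Fin n) (g : Fin n → ℕ) :
    ∑ j : {j : Fin n // i < j}, g j = ∑ j : Fin n, if i < j then g j else 0 := by
  rw [← Finset.sum_filter]
  exact (Finset.sum_subtype _ (fun x => by simp) g).symm

open Classical in
lemma invi_eq (π : SignedPerm n) (i : Fin n) :
    invi i π = if π.ε i = 1 then rt π.σ i else (n - i.val) + st π.σ i := by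
  rw [invi_eq_card, Finset.card_filter, Fintype.sum_option, Fintype.sum_prod_type]
  simp only [Fintype.sum_bool, cond_none, cond_some_true, cond_some_false]
  have hcount : ∑ j : {j : Fin n // i < j}, 1 = n - 1 - i.val := by
    rw [Finset.sum_const, smul_eq_mul, mul_one, Finset.card_univ, Fintype.card_subtype]
    rw [show Finset.filter (fun j => i < j) Finset.univ = Finset.Ioi i from by
      ext x; simp [Finset.mem_Ioi]]
    exact Fin.card_Ioi i
  rcases π.hε i with hi | hi
  · rw [if_pos hi, hi]
    norm_num
    have step1 : ∀ x : {j : Fin n // i < j},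
        ((if π.ε x = -1 ∧ π.σ x < π.σ i then 1 else 0)
          + if π.ε x = 1 ∧ π.σ x < π.σ i then 1 else 0)
        = if π.σ (x : Fin n) < π.σ i then (1:ℕ) else 0 := by
      intro x
      rcases π.hε x with hj | hj <;> rw [hj] <;> norm_num
    rw [Finset.sum_congr rfl (fun x _ => step1 x), sum_subtype_lt i (fun j => if π.σ j < π.σ i then 1 else 0), rt]
    apply Finset.sum_congr rfl
    intro j _
    split_ifs with h1 h2 h3 <;> first | rfl | tauto
  · rw [hi]
    norm_num
    have step1 : ∀ x : {j : Fin n // i < j},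
        ((if π.ε x = -1 ∨ π.ε x = 1 ∧ π.σ i < π.σ x then 1 else 0)
          + if π.ε x = 1 ∨ π.ε x = -1 ∧ π.σ i < π.σ x then 1 else 0)
        = 1 + if π.σ i < π.σ (x : Fin n) then (1:ℕ) else 0 := by
      intro x
      rcases π.hε x with hj | hj <;> rw [hj] <;> norm_num <;>
        split_ifs <;> norm_num <;> tauto
    rw [Finset.sum_congr rfl (fun x _ => step1 x), Finset.sum_add_distrib, hcount,
      sum_subtype_lt i (fun j => if π.σ i < π.σ j then 1 else 0), st]
    have h1 : (∑ j : Fin n, if i < j then if π.σ i < π.σ j then (1:ℕ) else 0 else 0)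
        = ∑ j : Fin n, if i < j ∧ π.σ i < π.σ j then 1 else 0 := by
      apply Finset.sum_congr rfl
      intro j _
      split_ifs <;> first | rfl | tauto
    rw [h1]
    have := i.isLt
    omega

open Classical

lemma card_lt_fin (x : Fin n) : (∑ y : Fin n, if y < x then (1:ℕ) else 0) = x.val := by
  rw [← Finset.sum_filter, Finset.sum_const, smul_eq_mul, mul_one]
  rw [show Finset.filter (fun y => y < x) Finset.univ = Finset.Iio x from by
    ext y; simp [Finset.mem_Iio]]
  exact Fin.card_Iio x

lemma card_gt_fin (x : Fin n) : (∑ y : Fin n, if x < y then (1:ℕ) else 0) = n - 1 - x.val := by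
  rw [← Finset.sum_filter, Finset.sum_const, smul_eq_mul, mul_one]
  rw [show Finset.filter (fun y => x < y) Finset.univ = Finset.Ioi x from by
    ext y; simp [Finset.mem_Ioi]]
  exact Fin.card_Ioi x

lemma rt_add_st (σ : Equiv.Perm (Fin n)) (i : Fin n) :
    rt σ i + st σ i = n - 1 - i.val := by
  rw [rt, st, ← Finset.sum_add_distrib, ← card_gt_fin i]
  apply Finset.sum_congr rfl
  intro j _
  rcases eq_or_ne j i with rfl | hne
  · simp
  · have : σ j ≠ σ i := fun hc => hne (σ.injective hc)
    rcases lt_or_gt_of_ne this with h | h <;> split_ifs <;> omega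

lemma rt_le (σ : Equiv.Perm (Fin n)) (i : Fin n) : rt σ i ≤ n - 1 - i.val := by
  have := rt_add_st σ i; omega

lemma st_le (σ : Equiv.Perm (Fin n)) (i : Fin n) : st σ i ≤ n - 1 - i.val := by
  have := rt_add_st σ i; omega

/-- claim A: `(σ i).val = #{j < i : σ j < σ i} + rt σ i` -/
lemma val_eq_lowcount_add_rt (σ : Equiv.Perm (Fin n)) (i : Fin n) :
    (σ i).val = (∑ j : Fin n, if j < i ∧ σ j < σ i then 1 else 0) + rt σ i := by
  rw [rt, ← Finset.sum_add_distrib, ← card_lt_fin (σ i),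
    ← Equiv.sum_comp σ (fun y => if y < σ i then (1:ℕ) else 0)]
  apply Finset.sum_congr rfl
  intro j _
  rcases lt_trichotomy j i with h | rfl | h <;> split_ifs <;> simp_all <;> omega

/-- claim C -/
lemma val_eq_lowcount_add_unused (σ : Equiv.Perm (Fin n)) (i : Fin n) (x : Fin n) :
    x.val = (∑ j : Fin n, if j < i ∧ σ j < x then 1 else 0)
      + ∑ y : Fin n, if (∀ j, j < i → σ j ≠ y) ∧ y < x then 1 else 0 := by
  have hg : (∑ j : Fin n, if j < i ∧ σ j < x then 1 else 0)
      = ∑ y : Fin n, if σ.symm y < i ∧ y < x then (1:ℕ) else 0 := by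
    rw [← Equiv.sum_comp σ (fun y => if σ.symm y < i ∧ y < x then (1:ℕ) else 0)]
    apply Finset.sum_congr rfl
    intro j _
    rw [σ.symm_apply_apply]
  rw [hg, ← Finset.sum_add_distrib, ← card_lt_fin x]
  apply Finset.sum_congr rfl
  intro y _
  have hiff : (∀ j, j < i → σ j ≠ y) ↔ ¬(σ.symm y < i) := by
    constructor
    · intro h hc
      exact h _ hc (σ.apply_symm_apply y)
    · intro h j hj hc
      exact h (by rw [← hc, σ.symm_apply_apply]; exact hj)
  split_ifs with h1 h2 h3 <;> simp_all <;> omega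

lemma sigma_eq_of_rt_eq (σ τ : Equiv.Perm (Fin n)) (h : ∀ i, rt σ i = rt τ i) : σ = τ := by
  suffices key : ∀ m : ℕ, ∀ i : Fin n, i.val = m → σ i = τ i by
    exact Equiv.ext fun i => key i.val i rfl
  intro m
  induction m using Nat.strong_induction_on with
  | _ m IH =>
  intro i him
  subst him
  have hagree : ∀ j : Fin n, j < i → σ j = τ j := fun j hj => IH j.val hj j rfl
  -- unused sets agree
  have hunused : ∀ y : Fin n, (∀ j, j < i → σ j ≠ y) ↔ (∀ j, j < i → τ j ≠ y) := by
    intro y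
    constructor <;> intro hy j hj <;> [rw [← hagree j hj]; rw [hagree j hj]] <;> exact hy j hj
  -- the g function agrees
  have hgagree : ∀ x : Fin n, (∑ j : Fin n, if j < i ∧ σ j < x then (1:ℕ) else 0)
      = ∑ j : Fin n, if j < i ∧ τ j < x then (1:ℕ) else 0 := by
    intro x
    apply Finset.sum_congr rfl
    intro j _
    by_cases hj : j < i
    · rw [show σ j = τ j from hagree j hj]
    · simp [hj]
  set H : Fin n → ℕ := fun x => ∑ y : Fin n, if (∀ j, j < i → σ j ≠ y) ∧ y < x then 1 else 0
    with hH
  -- H is strictly monotone on unused values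
  have hmono : ∀ x z : Fin n, (∀ j, j < i → σ j ≠ x) → x < z → H x < H z := by
    intro x z hx hxz
    apply Finset.sum_lt_sum
    · intro y _
      split_ifs with h1 h2
      · exact le_refl _
      · exact absurd ⟨h1.1, h1.2.trans hxz⟩ h2
      · exact Nat.zero_le _
      · exact Nat.zero_le _
    · refine ⟨x, Finset.mem_univ x, ?_⟩
      rw [if_neg (fun hc => lt_irrefl x hc.2), if_pos ⟨hx, hxz⟩]
      norm_num
  have hHσ : H (σ i) = rt σ i := by
    have hA := val_eq_lowcount_add_rt σ i
    have hC := val_eq_lowcount_add_unused σ i (σ i)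
    have hu : H (σ i) = ∑ y : Fin n, if (∀ j, j < i → σ j ≠ y) ∧ y < σ i then 1 else 0 := rfl
    omega
  have hHτ : H (τ i) = rt τ i := by
    have hA := val_eq_lowcount_add_rt τ i
    have hC := val_eq_lowcount_add_unused τ i (τ i)
    have hu : H (τ i) = ∑ y : Fin n, if (∀ j, j < i → τ j ≠ y) ∧ y < τ i then 1 else 0 := by
      rw [hH]
      simp only [hunused]
    omega
  have hxσ : ∀ j, j < i → σ j ≠ σ i := fun j hj hc => absurd (σ.injective hc) hj.ne
  have hxτ : ∀ j, j < i → σ j ≠ τ i := by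
    intro j hj
    rw [hagree j hj]
    exact fun hc => absurd (τ.injective hc) hj.ne
  rcases lt_trichotomy (σ i) (τ i) with hlt | heq | hlt
  · exact absurd (hHσ ▸ hHτ ▸ hmono _ _ hxσ hlt) (by rw [h i]; omega)
  · exact heq
  · exact absurd (hHτ ▸ hHσ ▸ hmono _ _ hxτ hlt) (by rw [h i]; omega)

lemma invi_lt (π : SignedPerm n) (i : Fin n) : invi i π < 2 * (n - i.val) := by
  have hi := i.isLt
  have h1 := rt_le π.σ i
  have h2 := st_le π.σ i
  rw [invi_eq]
  split_ifs <;> omega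

lemma invi_inj_step (π π' : SignedPerm n) (i : Fin n) (h : invi i π = invi i π') :
    π.ε i = π'.ε i ∧ rt π.σ i = rt π'.σ i := by
  have hi := i.isLt
  have h1 := rt_le π.σ i
  have h2 := st_le π.σ i
  have h1' := rt_le π'.σ i
  have h2' := st_le π'.σ i
  have hs := rt_add_st π.σ i
  have hs' := rt_add_st π'.σ i
  rw [invi_eq, invi_eq] at h
  rcases π.hε i with he | he <;> rcases π'.hε i with he' | he' <;>
    rw [he, he'] at h ⊢ <;> norm_num at h ⊢ <;> omega

/-- weights `W k = 2^k k!` -/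
def W (k : ℕ) : ℕ := 2 ^ k * k.factorial

lemma W_succ (k : ℕ) : W (k + 1) = 2 * (k + 1) * W k := by
  simp [W, Nat.factorial_succ, pow_succ]
  ring

lemma W_pos (k : ℕ) : 0 < W k :=
  Nat.mul_pos (Nat.pow_pos (by norm_num)) k.factorial_pos

lemma radix_lt : ∀ (N : ℕ) (d : Fin N → ℕ), (∀ k, d k < 2 * (k.val + 1)) →
    ∑ k, d k * W k.val < W N := by
  intro N
  induction N with
  | zero => intro d _; simp [W]
  | succ N IH =>
    intro d hd
    rw [Fin.sum_univ_castSucc]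
    have h1 : ∑ k : Fin N, d k.castSucc * W (k.castSucc).val < W N :=
      IH (fun k => d k.castSucc) (fun k => hd k.castSucc)
    have h2 : d (Fin.last N) ≤ 2 * N + 1 := by
      have := hd (Fin.last N); rw [Fin.val_last] at this; omega
    calc ∑ k : Fin N, d k.castSucc * W (k.castSucc).val + d (Fin.last N) * W (Fin.last N).val
        < W N + d (Fin.last N) * W N := by
          simp only [Fin.val_last]
          omega
      _ ≤ W N + (2 * N + 1) * W N := by
          have := Nat.mul_le_mul_right (W N) h2
          omega
      _ = 2 * (N + 1) * W N := by ring
      _ = W (N + 1) := (W_succ N).symm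

lemma radix_digit_unique {a c m b d : ℕ} (ha : a < m) (hc : c < m)
    (h : a + b * m = c + d * m) : a = c ∧ b = d := by
  have h1 : a = c := by
    have := congrArg (· % m) h
    simpa [Nat.add_mul_mod_self_right, Nat.mod_eq_of_lt ha, Nat.mod_eq_of_lt hc] using this
  constructor
  · exact h1
  · rw [h1] at h
    have h2 : b * m = d * m := by omega
    exact Nat.eq_of_mul_eq_mul_right (by omega) h2

lemma radix_inj : ∀ (N : ℕ) (d d' : Fin N → ℕ), (∀ k, d k < 2 * (k.val + 1)) →
    (∀ k, d' k < 2 * (k.val + 1)) →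
    ∑ k, d k * W k.val = ∑ k, d' k * W k.val → ∀ k, d k = d' k := by
  intro N
  induction N with
  | zero => intro _ _ _ _ _ k; exact absurd k.isLt (by omega)
  | succ N IH =>
    intro d d' hd hd' hsum
    rw [Fin.sum_univ_castSucc, Fin.sum_univ_castSucc] at hsum
    simp only [Fin.val_last] at hsum
    have hb1 : ∑ k : Fin N, d k.castSucc * W (k.castSucc).val < W N :=
      radix_lt N _ (fun k => hd k.castSucc)
    have hb2 : ∑ k : Fin N, d' k.castSucc * W (k.castSucc).val < W N :=
      radix_lt N _ (fun k => hd' k.castSucc)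
    obtain ⟨hlow, hhigh⟩ := radix_digit_unique hb1 hb2 hsum
    have hrest := IH (fun k => d k.castSucc) (fun k => d' k.castSucc)
      (fun k => hd k.castSucc) (fun k => hd' k.castSucc) hlow
    intro k
    rcases Fin.eq_castSucc_or_eq_last k with ⟨j, rfl⟩ | rfl
    · exact hrest j
    · exact hhigh

/-- `SignedPerm n` is equivalent to `Perm (Fin n) × (Fin n → Bool)` -/
lemma sp_ext {π π' : SignedPerm n} (h1 : π.σ = π'.σ) (h2 : π.ε = π'.ε) : π = π' := by
  cases π; cases π'
  simp only at h1 h2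
  subst h1; subst h2
  rfl

def spEquiv : SignedPerm n ≃ Equiv.Perm (Fin n) × (Fin n → Bool) where
  toFun π := (π.σ, fun i => decide (π.ε i = 1))
  invFun p := ⟨p.1, fun i => if p.2 i then 1 else -1,
    fun i => by by_cases h : p.2 i <;> simp [h]⟩
  left_inv π := by
    refine sp_ext rfl ?_
    funext i
    show (if decide (π.ε i = 1) = true then (1:ℤ) else -1) = π.ε i
    rcases π.hε i with h | h <;> simp [h]
  right_inv p := by
    refine Prod.ext rfl (funext fun i => ?_)
    rcases hb : p.2 i <;> simp [hb]

noncomputable instance : Fintype (SignedPerm n) := Fintype.ofEquiv _ spEquiv.symm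

lemma card_sp : Fintype.card (SignedPerm n) = 2 ^ n * n.factorial := by
  rw [Fintype.card_congr (spEquiv (n := n)), Fintype.card_prod, Fintype.card_perm,
    Fintype.card_fun]
  simp [Fintype.card_fin, mul_comm]

lemma sum_eq_radix (π : SignedPerm n) :
    ∑ i : Fin n, invi i π * (2 ^ (n - 1 - i.val) * Nat.factorial (n - 1 - i.val))
      = ∑ k : Fin n, (invi (Fin.rev k) π) * W k.val := by
  rw [show (∑ i : Fin n, invi i π * (2 ^ (n - 1 - i.val) * Nat.factorial (n - 1 - i.val)))
      = ∑ i : Fin n, invi i π * W (n - 1 - i.val) from rfl]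
  rw [← Fintype.sum_equiv Fin.revPerm
    (fun k => invi (Fin.rev k) π * W k.val)
    (fun i => invi i π * W (n - 1 - i.val)) (fun k => ?_)]
  have hk := k.isLt
  rw [show (Fin.revPerm k : Fin n) = Fin.rev k from rfl, Fin.val_rev,
    show n - 1 - (n - (k.val + 1)) = k.val from by omega]

lemma digit_bound (π : SignedPerm n) (k : Fin n) :
    invi (Fin.rev k) π < 2 * (k.val + 1) := by
  have := invi_lt π (Fin.rev k)
  rw [Fin.val_rev] at this
  have hk := k.isLt
  omega

lemma f_inj (π π' : SignedPerm n)
    (h : ∑ i : Fin n, invi i π * (2 ^ (n - 1 - i.val) * Nat.factorial (n - 1 - i.val))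
       = ∑ i : Fin n, invi i π' * (2 ^ (n - 1 - i.val) * Nat.factorial (n - 1 - i.val))) :
    π = π' := by
  rw [sum_eq_radix, sum_eq_radix] at h
  have hd := radix_inj n (fun k => invi (Fin.rev k) π) (fun k => invi (Fin.rev k) π')
    (fun k => digit_bound π k) (fun k => digit_bound π' k) h
  have hinvi : ∀ i : Fin n, invi i π = invi i π' := by
    intro i
    have := hd (Fin.rev i)
    rwa [Fin.rev_rev] at this
  have hstep := fun i => invi_inj_step π π' i (hinvi i)
  have hσ : π.σ = π'.σ := sigma_eq_of_rt_eq _ _ (fun i => (hstep i).2)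
  exact sp_ext hσ (funext fun i => (hstep i).1)


end SignedPerm

open SignedPerm in
/-- With `Bᵢ = 2^i · i!`, the map
`bₙ(π) = ∑_{i=1}^{n} invᵢ(π) · B_{n-i}` is a bijection from `Bₙ` onto
`{0, 1, …, 2^n·n! - 1}` (position `i ∈ [n]` is `i.val + 1` in 1-based indexing,
so `n - i = n - 1 - i.val`). -/
theorem b_bijective (n : ℕ) (hn : 1 ≤ n) :
    Set.BijOn
      (fun π : SignedPerm n =>
        ∑ i : Fin n, invi i π * (2 ^ (n - 1 - i.val) * Nat.factorial (n - 1 - i.val)))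
      Set.univ {m : ℕ | m < 2 ^ n * Nat.factorial n} := by
  classical
  set f := fun π : SignedPerm n =>
    ∑ i : Fin n, invi i π * (2 ^ (n - 1 - i.val) * Nat.factorial (n - 1 - i.val)) with hf
  have hmaps : ∀ π : SignedPerm n, f π < 2 ^ n * Nat.factorial n := by
    intro π
    rw [hf]
    dsimp only
    rw [sum_eq_radix]
    exact radix_lt n _ (fun k => digit_bound π k)
  refine ⟨fun π _ => hmaps π, fun π _ π' _ h => f_inj π π' h, ?_⟩
  intro m hm
  have him : Finset.image f Finset.univ = Finset.range (2 ^ n * Nat.factorial n) := by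
    apply Finset.eq_of_subset_of_card_le
    · intro x hx
      obtain ⟨π, _, rfl⟩ := Finset.mem_image.mp hx
      exact Finset.mem_range.mpr (hmaps π)
    · rw [Finset.card_range, Finset.card_image_of_injective _ (fun a b => f_inj a b),
        Finset.card_univ, card_sp]
  have : m ∈ Finset.image f Finset.univ := by
    rw [him]
    exact Finset.mem_range.mpr hm
  obtain ⟨π, _, hπ⟩ := Finset.mem_image.mp this
  exact ⟨π, Set.mem_univ π, hπ⟩
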